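/- For a complex number λ, the exponential sequence (λ^k)_{k∈ℕ} belongs to X if and only if |λ| < 1 or λ = 1. -/

import Mathlib

open Filter Topology

/-- Membership in the complex space `X` (0-based indexing: `x k` is the
paper's `x_{k+1}`). -/
def MemXC (x : ℕ → ℂ) : Prop :=
  Summable (fun k : ℕ => ‖x (k + 1) / ((k : ℂ) + 2) - x k / ((k : ℂ) + 1)‖) ∧
  Tendsto (fun k : ℕ => x k / ((k : ℂ) + 1)) atTop (𝓝 0)

lemma norm_cast_add_one (k : ℕ) : ‖((k : ℂ) + 1)‖ = (k : ℝ) + 1 := by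
  rw [show ((k : ℂ) + 1) = ((k + 1 : ℕ) : ℂ) by push_cast; ring, Complex.norm_natCast]
  push_cast; ring

lemma norm_cast_add_two (k : ℕ) : ‖((k : ℂ) + 2)‖ = (k : ℝ) + 2 := by
  rw [show ((k : ℂ) + 2) = ((k + 2 : ℕ) : ℂ) by push_cast; ring, Complex.norm_natCast]
  push_cast; ring

lemma cast_add_one_ne (k : ℕ) : ((k : ℂ) + 1) ≠ 0 := Nat.cast_add_one_ne_zero k

lemma cast_add_two_ne (k : ℕ) : ((k : ℂ) + 2) ≠ 0 := by
  intro h0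
  have h := norm_cast_add_two k
  rw [h0, norm_zero] at h
  nlinarith [Nat.cast_nonneg (α := ℝ) k]

/-- For `λ ∈ ℂ`, the exponential sequence `(λ^k)_{k≥1}` belongs to `X`
iff `|λ| < 1` or `λ = 1`. -/
theorem stmt_2 (l : ℂ) :
    MemXC (fun k : ℕ => l ^ (k + 1)) ↔ (‖l‖ < 1 ∨ l = 1) := by
  constructor
  · rintro ⟨hs, -⟩
    by_contra hcon
    push_neg at hcon
    obtain ⟨h1, h2⟩ := hcon
    -- h1 : 1 ≤ ‖l‖, h2 : l ≠ 1
    set g : ℕ → ℂ := fun k => l * ((k : ℂ) + 1) / ((k : ℂ) + 2) - 1 with hg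
    set F : ℕ → ℝ := fun k => ‖l ^ (k + 1 + 1) / ((k : ℂ) + 2) - l ^ (k + 1) / ((k : ℂ) + 1)‖
      with hF
    have hsF : Summable F := hs
    have hfac : ∀ k : ℕ, l ^ (k + 1 + 1) / ((k : ℂ) + 2) - l ^ (k + 1) / ((k : ℂ) + 1)
        = (l ^ (k + 1) / ((k : ℂ) + 1)) * g k := by
      intro k
      simp only [hg]
      field_simp [hg, cast_add_one_ne k, cast_add_two_ne k]
      ring
    have hgt : Tendsto g atTop (𝓝 (l - 1)) := by
      have h2' : Tendsto (fun k : ℕ => (((k : ℂ) + 2))⁻¹) atTop (𝓝 0) := by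
        rw [tendsto_zero_iff_norm_tendsto_zero]
        have heq : ∀ k : ℕ, ‖(((k : ℂ) + 2))⁻¹‖ = ((k : ℝ) + 2)⁻¹ := by
          intro k; rw [norm_inv, norm_cast_add_two]
        simp only [heq]
        exact Filter.Tendsto.inv_tendsto_atTop (f := fun k : ℕ => (k : ℝ) + 2)
          (tendsto_atTop_add_const_right atTop 2 tendsto_natCast_atTop_atTop)
      have hrat : Tendsto (fun k : ℕ => ((k : ℂ) + 1) / ((k : ℂ) + 2)) atTop (𝓝 1) := by
        have heq : ∀ k : ℕ, ((k : ℂ) + 1) / ((k : ℂ) + 2) = 1 - (((k : ℂ) + 2))⁻¹ := by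
          intro k; field_simp [cast_add_two_ne k]; ring
        simp only [heq]
        simpa using tendsto_const_nhds.sub h2'
      have : Tendsto (fun k : ℕ => l * (((k : ℂ) + 1) / ((k : ℂ) + 2)) - 1) atTop
          (𝓝 (l * 1 - 1)) := (tendsto_const_nhds.mul hrat).sub tendsto_const_nhds
      simpa [hg, mul_div_assoc] using this
    have hgn : Tendsto (fun k => ‖g k‖) atTop (𝓝 ‖l - 1‖) := hgt.norm
    have hc : 0 < ‖l - 1‖ := by
      rw [norm_pos_iff, sub_ne_zero]; exact h2
    set c := ‖l - 1‖ with hcdef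
    have hev : ∀ᶠ k in atTop, c / 2 < ‖g k‖ :=
      hgn.eventually (eventually_gt_nhds (by linarith))
    obtain ⟨N, hN⟩ := eventually_atTop.mp hev
    have hs' : Summable (fun k : ℕ => F (k + N)) := (summable_nat_add_iff N).mpr hsF
    have hbound : ∀ k : ℕ, (c / 2) * ((k : ℝ) + N + 1)⁻¹ ≤ F (k + N) := by
      intro k
      have hgk : c / 2 ≤ ‖g (k + N)‖ := (hN (k + N) (by omega)).le
      have h1p : (1 : ℝ) ≤ ‖l‖ ^ (k + N + 1) := one_le_pow₀ h1
      have hd : (0 : ℝ) < (k : ℝ) + N + 1 := by positivity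
      have hFval : F (k + N) = ‖l‖ ^ (k + N + 1) / ((k : ℝ) + N + 1) * ‖g (k + N)‖ := by
        rw [hF]
        simp only
        rw [hfac (k + N), norm_mul, norm_div, norm_pow, norm_cast_add_one]
        push_cast
        ring_nf
      rw [hFval]
      calc (c / 2) * ((k : ℝ) + N + 1)⁻¹
          ≤ ‖g (k + N)‖ * ((k : ℝ) + N + 1)⁻¹ :=
            mul_le_mul_of_nonneg_right hgk (by positivity)
        _ = 1 / ((k : ℝ) + N + 1) * ‖g (k + N)‖ := by rw [one_div]; ring
        _ ≤ ‖l‖ ^ (k + N + 1) / ((k : ℝ) + N + 1) * ‖g (k + N)‖ := by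
            gcongr
    have hsum2 : Summable (fun k : ℕ => (c / 2) * ((k : ℝ) + N + 1)⁻¹) :=
      Summable.of_nonneg_of_le (fun k => by positivity) hbound hs'
    have hc2 : (c / 2) ≠ 0 := by positivity
    have hsum3 : Summable (fun k : ℕ => ((k : ℝ) + N + 1)⁻¹) :=
      (summable_mul_left_iff hc2).mp hsum2
    have hsum4 : Summable (fun n : ℕ => ((n : ℝ))⁻¹) := by
      refine (summable_nat_add_iff (N + 1)).mp ?_
      have : (fun k : ℕ => ((↑(k + (N + 1)) : ℝ))⁻¹) = fun k : ℕ => ((k : ℝ) + N + 1)⁻¹ := by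
        funext k; push_cast; ring_nf
      rw [this]; exact hsum3
    exact Real.not_summable_one_div_natCast (by simpa [one_div] using hsum4)
  · rintro (h | h)
    · constructor
      · apply Summable.of_nonneg_of_le (fun k => norm_nonneg _)
          (f := fun k => 2 * ‖l‖ ^ (k + 1))
        · intro k
          calc ‖l ^ (k + 1 + 1) / ((k : ℂ) + 2) - l ^ (k + 1) / ((k : ℂ) + 1)‖
              ≤ ‖l ^ (k + 1 + 1) / ((k : ℂ) + 2)‖ + ‖l ^ (k + 1) / ((k : ℂ) + 1)‖ :=
                norm_sub_le _ _
            _ ≤ ‖l‖ ^ (k + 1) + ‖l‖ ^ (k + 1) := by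
                rw [norm_div, norm_div, norm_pow, norm_pow, norm_cast_add_one, norm_cast_add_two]
                have hk1 : (1 : ℝ) ≤ (k : ℝ) + 1 := by
                  have := Nat.cast_nonneg (α := ℝ) k; linarith
                have hk2 : (1 : ℝ) ≤ (k : ℝ) + 2 := by linarith
                have e1 : ‖l‖ ^ (k + 1 + 1) / ((k : ℝ) + 2) ≤ ‖l‖ ^ (k + 1) :=
                  le_trans (div_le_self (by positivity) hk2)
                    (pow_le_pow_of_le_one (norm_nonneg l) h.le (by omega))
                have e2 : ‖l‖ ^ (k + 1) / ((k : ℝ) + 1) ≤ ‖l‖ ^ (k + 1) :=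
                  div_le_self (by positivity) hk1
                linarith
            _ = 2 * ‖l‖ ^ (k + 1) := by ring
        · exact (summable_nat_add_iff (f := fun n : ℕ => 2 * ‖l‖ ^ n) 1).mpr
            ((summable_geometric_of_lt_one (norm_nonneg l) h).mul_left 2)
      · rw [tendsto_zero_iff_norm_tendsto_zero]
        apply squeeze_zero (fun k => norm_nonneg _) (g := fun k => ‖l‖ ^ (k + 1))
        · intro k
          rw [norm_div, norm_pow, norm_cast_add_one]
          exact div_le_self (by positivity)
            (by have := Nat.cast_nonneg (α := ℝ) k; linarith)
        · have h0 := tendsto_pow_atTop_nhds_zero_of_lt_one (norm_nonneg l) h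
          have h1 : Tendsto (fun k : ℕ => ‖l‖ ^ k * ‖l‖) atTop (𝓝 (0 * ‖l‖)) :=
            h0.mul_const ‖l‖
          simpa [pow_succ] using h1
    · subst h
      constructor
      · simp only [one_pow]
        apply Summable.of_nonneg_of_le (fun k => norm_nonneg _)
          (f := fun k : ℕ => 1 / ((k : ℝ) + 1) ^ 2)
        · intro k
          have heq : (1 : ℂ) / ((k : ℂ) + 2) - 1 / ((k : ℂ) + 1)
              = -(1 / (((k : ℂ) + 1) * ((k : ℂ) + 2))) := by
            field_simp [cast_add_one_ne k, cast_add_two_ne k]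
            ring
          rw [heq, norm_neg, norm_div, norm_one, norm_mul, norm_cast_add_one, norm_cast_add_two]
          rw [div_le_div_iff₀ (by positivity) (by positivity)]
          nlinarith [Nat.cast_nonneg (α := ℝ) k]
        · have h2 : Summable (fun n : ℕ => 1 / (n : ℝ) ^ 2) :=
            Real.summable_one_div_nat_pow.mpr one_lt_two
          have h3 := (summable_nat_add_iff 1).mpr h2
          have : (fun k : ℕ => 1 / ((↑(k + 1) : ℝ)) ^ 2) = fun k : ℕ => 1 / ((k : ℝ) + 1) ^ 2 := by
            funext k; push_cast; ring_nf
          rwa [this] at h3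
      · simp only [one_pow]
        rw [tendsto_zero_iff_norm_tendsto_zero]
        have heq : ∀ k : ℕ, ‖(1 : ℂ) / ((k : ℂ) + 1)‖ = 1 / ((k : ℝ) + 1) := by
          intro k; rw [norm_div, norm_one, norm_cast_add_one]
        simp only [heq]
        exact tendsto_one_div_add_atTop_nhds_zero_nat
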